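/- Let (X_t)_{t=1}^T be independent and identically distributed real-valued random variables with F(τ) = P(X_1 ≤ τ), let Δ ∈ ℕ, let τ ∈ ℝ, and let t_1 < t_2 < ... < t_N be deterministic time indices in {1,...,T−Δ} satisfying t_{j+1} − t_j > Δ for all j = 1,...,N−1. Then the number of trigger coincidences K = Σ_{j=1}^N 1(max_{δ=0,...,Δ} X_{t_j+δ} > τ) has the binomial distribution with parameters N and π = 1 − F(τ)^{Δ+1}; that is, P(K = k) = C(N,k) · π^k · (1−π)^{N−k} for every 0 ≤ k ≤ N. -/

import Mathlib

open MeasureTheory ProbabilityTheory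
open scoped ENNReal

lemma aux_binom' {Ω : Type*} [MeasureSpace Ω] [IsProbabilityMeasure (ℙ : Measure Ω)]
    (Z : ℕ → Ω → ℕ) (hZ01 : ∀ j ω, Z j ω ≤ 1)
    (hZm : ∀ j, Measurable (Z j)) (N : ℕ) (p : ℝ≥0∞)
    (hp : ∀ j < N, ℙ {ω | Z j ω = 1} = p)
    (hind : ∀ n < N, IndepFun (fun ω => ∑ j ∈ Finset.range n, Z j ω) (Z n) ℙ) :
    ∀ n ≤ N, ∀ k : ℕ, ℙ {ω | (∑ j ∈ Finset.range n, Z j ω) = k}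
      = (n.choose k : ℝ≥0∞) * p ^ k * (1 - p) ^ (n - k) := by
  have hp0 : ∀ j < N, ℙ {ω | Z j ω = 0} = 1 - p := by
    intro j hj
    have hset : {ω | Z j ω = 0} = {ω | Z j ω = 1}ᶜ := by
      ext ω; have := hZ01 j ω; simp only [Set.mem_setOf_eq, Set.mem_compl_iff]; omega
    rw [hset, prob_compl_eq_one_sub, hp j hj]
    exact (hZm j) (measurableSet_singleton 1)
  intro n
  induction n with
  | zero =>
    intro _ k
    cases k with
    | zero => simp
    | succ m => simp
  | succ n IH =>
    intro hn k
    have hnN : n < N := hn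
    have IH' := IH (le_of_lt hnN)
    have hSm : Measurable (fun ω => ∑ j ∈ Finset.range n, Z j ω) :=
      Finset.measurable_sum _ fun j _ => hZm j
    have hfac : ∀ a b : ℕ,
        ℙ ({ω | (∑ j ∈ Finset.range n, Z j ω) = a} ∩ {ω | Z n ω = b})
          = ℙ {ω | (∑ j ∈ Finset.range n, Z j ω) = a} * ℙ {ω | Z n ω = b} := by
      intro a b
      exact (hind n hnN).measure_inter_preimage_eq_mul {a} {b}
        (measurableSet_singleton a) (measurableSet_singleton b)
    cases k with
    | zero =>
      have hset : {ω | (∑ j ∈ Finset.range (n+1), Z j ω) = 0}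
          = {ω | (∑ j ∈ Finset.range n, Z j ω) = 0} ∩ {ω | Z n ω = 0} := by
        ext ω
        simp only [Finset.sum_range_succ, Set.mem_setOf_eq, Set.mem_inter_iff]
        omega
      rw [hset, hfac 0 0, IH' 0, hp0 n hnN]
      simp [pow_succ]
    | succ m =>
      have hset : {ω | (∑ j ∈ Finset.range (n+1), Z j ω) = m + 1}
          = ({ω | (∑ j ∈ Finset.range n, Z j ω) = m + 1} ∩ {ω | Z n ω = 0})
            ∪ ({ω | (∑ j ∈ Finset.range n, Z j ω) = m} ∩ {ω | Z n ω = 1}) := by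
        ext ω
        have := hZ01 n ω
        simp only [Finset.sum_range_succ, Set.mem_setOf_eq, Set.mem_inter_iff, Set.mem_union]
        omega
      have hdisj : Disjoint
          ({ω | (∑ j ∈ Finset.range n, Z j ω) = m + 1} ∩ {ω | Z n ω = 0})
          ({ω | (∑ j ∈ Finset.range n, Z j ω) = m} ∩ {ω | Z n ω = 1}) := by
        rw [Set.disjoint_left]
        rintro ω ⟨-, h0⟩ ⟨-, h1⟩
        simp only [Set.mem_setOf_eq] at h0 h1
        omega
      have hm2 : MeasurableSet ({ω | (∑ j ∈ Finset.range n, Z j ω) = m} ∩ {ω | Z n ω = 1}) :=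
        (hSm (measurableSet_singleton m)).inter ((hZm n) (measurableSet_singleton 1))
      rw [hset, measure_union hdisj hm2, hfac (m+1) 0, hfac m 1,
        hp0 n hnN, hp n hnN, IH' (m+1), IH' m]
      rcases lt_trichotomy m n with h | h | h
      · have h1 : n - m = (n - (m+1)) + 1 := by omega
        have h2 : n + 1 - (m + 1) = (n - (m+1)) + 1 := by omega
        have h3 : (n+1).choose (m+1) = n.choose m + n.choose (m+1) :=
          Nat.choose_succ_succ n m
        rw [h1, h2, h3]
        push_cast
        ring
      · subst h
        simp [Nat.choose_succ_self, Nat.sub_self, pow_succ]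
      · have h1 : n.choose (m+1) = 0 := Nat.choose_eq_zero_of_lt (by omega)
        have h2 : n.choose m = 0 := Nat.choose_eq_zero_of_lt h
        have h3 : (n+1).choose (m+1) = 0 := Nat.choose_eq_zero_of_lt (by omega)
        simp [h1, h2, h3]

/-- For an iid real-valued time series `(X_t)_{t=1}^T` with `F(τ) = P(X_1 ≤ τ)`, and
deterministic event times `t_1 < ... < t_N` in `{1,...,T-Δ}` separated by more than `Δ`
time steps, the number of trigger coincidences
`K = Σ_j 1(max_{δ=0,...,Δ} X_{t_j+δ} > τ)` is binomially distributed with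
parameters `N` and `π = 1 - F(τ)^(Δ+1)`. -/
theorem threshold_trigger_coincidences_binomial
    {Ω : Type*} [MeasureSpace Ω] [IsProbabilityMeasure (ℙ : Measure Ω)]
    (X : ℕ → Ω → ℝ) (hmeas : ∀ t, Measurable (X t))
    (hindep : iIndepFun X ℙ)
    (hident : ∀ s t, Measure.map (X s) ℙ = Measure.map (X t) ℙ)
    (τ : ℝ) (F : ℝ) (hF0 : 0 ≤ F) (hF : ℙ {ω | X 1 ω ≤ τ} = ENNReal.ofReal F)
    (T Δ N : ℕ) (ts : ℕ → ℕ)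
    (hrange : ∀ j < N, 1 ≤ ts j ∧ ts j + Δ ≤ T)
    (hgap : ∀ j, j + 1 < N → ts j + Δ < ts (j + 1))
    (k : ℕ) (hk : k ≤ N) :
    ℙ {ω | (∑ j ∈ Finset.range N,
        if τ < (Finset.range (Δ + 1)).sup' Finset.nonempty_range_add_one
            (fun δ => X (ts j + δ) ω) then 1 else 0) = k}
      = ENNReal.ofReal ((N.choose k : ℝ) * (1 - F ^ (Δ + 1)) ^ k
          * (1 - (1 - F ^ (Δ + 1))) ^ (N - k)) := by
  classical
  set q := ENNReal.ofReal F with hqdef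
  have hq1 : q ≤ 1 := by rw [← hF]; exact prob_le_one
  have hF1 : F ≤ 1 := ENNReal.ofReal_le_one.mp hq1
  set Z : ℕ → Ω → ℕ := fun j ω =>
    if τ < (Finset.range (Δ + 1)).sup' Finset.nonempty_range_add_one
        (fun δ => X (ts j + δ) ω) then 1 else 0 with hZdef
  have hZ01 : ∀ j ω, Z j ω ≤ 1 := by
    intro j ω; rw [hZdef]; dsimp only; split_ifs <;> omega
  have hsupmeas0 : ∀ j, Measurable (fun ω => (Finset.range (Δ + 1)).sup'
      Finset.nonempty_range_add_one (fun δ => X (ts j + δ) ω)) := by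
    intro j
    have hm := Finset.measurable_sup' (s := Finset.range (Δ+1)) Finset.nonempty_range_add_one
      (f := fun δ => X (ts j + δ)) (fun δ _ => hmeas _)
    have hfe : (fun ω => (Finset.range (Δ + 1)).sup' Finset.nonempty_range_add_one
        (fun δ => X (ts j + δ) ω))
        = (Finset.range (Δ+1)).sup' Finset.nonempty_range_add_one (fun δ => X (ts j + δ)) :=
      funext fun ω => (Finset.sup'_apply Finset.nonempty_range_add_one
        (fun δ => X (ts j + δ)) ω).symm
    rw [hfe]; exact hm
  have hZm : ∀ j, Measurable (Z j) := by
    intro j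
    rw [hZdef]
    exact Measurable.ite (measurableSet_lt measurable_const (hsupmeas0 j))
      measurable_const measurable_const
  -- per-block probability
  have hp : ∀ j < N, ℙ {ω | Z j ω = 1} = 1 - q ^ (Δ + 1) := by
    intro j _
    have hset1 : {ω | Z j ω = 1} = {ω | τ < (Finset.range (Δ + 1)).sup'
        Finset.nonempty_range_add_one (fun δ => X (ts j + δ) ω)} := by
      ext ω; simp only [hZdef, Set.mem_setOf_eq]; split_ifs with h <;> simp [h]
    rw [hset1]
    set B : Finset ℕ := (Finset.range (Δ+1)).image (fun δ => ts j + δ) with hB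
    have hsetc : {ω | (Finset.range (Δ + 1)).sup' Finset.nonempty_range_add_one
          (fun δ => X (ts j + δ) ω) ≤ τ} = ⋂ i ∈ B, X i ⁻¹' Set.Iic τ := by
      ext ω
      simp [Finset.sup'_le_iff, hB, Set.mem_iInter]
    have hmc : ∀ i ∈ B, MeasurableSet ((fun _ => Set.Iic τ) i) :=
      fun i _ => measurableSet_Iic
    have hprod : ℙ (⋂ i ∈ B, X i ⁻¹' Set.Iic τ) = ∏ i ∈ B, ℙ (X i ⁻¹' Set.Iic τ) :=
      hindep.measure_inter_preimage_eq_mul B hmc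
    have hone : ∀ i, ℙ (X i ⁻¹' Set.Iic τ) = q := by
      intro i
      rw [← Measure.map_apply (hmeas i) measurableSet_Iic, hident i 1,
        Measure.map_apply (hmeas 1) measurableSet_Iic, ← hF]
      rfl
    have hcard : B.card = Δ + 1 := by
      rw [hB, Finset.card_image_of_injective _ (add_right_injective _), Finset.card_range]
    have hcomp : ℙ {ω | (Finset.range (Δ + 1)).sup' Finset.nonempty_range_add_one
          (fun δ => X (ts j + δ) ω) ≤ τ} = q ^ (Δ + 1) := by
      rw [hsetc, hprod, Finset.prod_congr rfl (fun i _ => hone i), Finset.prod_const, hcard]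
    have hcompl : {ω | τ < (Finset.range (Δ + 1)).sup' Finset.nonempty_range_add_one
          (fun δ => X (ts j + δ) ω)} = {ω | (Finset.range (Δ + 1)).sup'
          Finset.nonempty_range_add_one (fun δ => X (ts j + δ) ω) ≤ τ}ᶜ := by
      ext ω; simp [not_le]
    rw [hcompl, prob_compl_eq_one_sub (measurableSet_le (hsupmeas0 j) measurable_const), hcomp]
  -- independence of the partial sum and the next indicator
  have hmono : ∀ j, ∀ i, i < j → j < N → ts i + Δ < ts j := by
    intro j
    induction j with
    | zero => omega
    | succ j IHj =>
      intro i hi hN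
      rcases Nat.lt_succ_iff_lt_or_eq.mp hi with h | h
      · calc ts i + Δ < ts j := IHj i h (by omega)
          _ ≤ ts j + Δ := Nat.le_add_right _ _
          _ < ts (j+1) := hgap j hN
      · subst h; exact hgap i hN
  have hind : ∀ n < N, IndepFun (fun ω => ∑ j ∈ Finset.range n, Z j ω) (Z n) ℙ := by
    intro n hn
    set B : ℕ → Finset ℕ := fun j => (Finset.range (Δ+1)).image (fun δ => ts j + δ) with hBdef
    set S : Finset ℕ := (Finset.range n).biUnion B with hSdef
    have hmemS : ∀ j < n, ∀ δ < Δ + 1, ts j + δ ∈ S := by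
      intro j hj δ hδ
      rw [hSdef]
      exact Finset.mem_biUnion.mpr ⟨j, Finset.mem_range.mpr hj,
        Finset.mem_image.mpr ⟨δ, Finset.mem_range.mpr hδ, rfl⟩⟩
    have hmemT : ∀ δ < Δ + 1, ts n + δ ∈ B n := by
      intro δ hδ
      exact Finset.mem_image.mpr ⟨δ, Finset.mem_range.mpr hδ, rfl⟩
    have hdisj : Disjoint S (B n) := by
      rw [Finset.disjoint_left]
      intro x hx hx'
      rw [hSdef] at hx
      obtain ⟨j, hj, hxj⟩ := Finset.mem_biUnion.mp hx
      rw [Finset.mem_range] at hj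
      obtain ⟨δ, hδ, rfl⟩ := Finset.mem_image.mp hxj
      obtain ⟨δ', hδ', he⟩ := Finset.mem_image.mp hx'
      rw [Finset.mem_range] at hδ hδ'
      have := hmono n j hj hn
      omega
    have base := hindep.indepFun_finset S (B n) hdisj hmeas
    set φ : ((i : S) → ℝ) → ℕ := fun v => ∑ j ∈ Finset.range n,
        (if τ < (Finset.range (Δ + 1)).sup' Finset.nonempty_range_add_one
            (fun δ => if h : ts j + δ ∈ S then v ⟨ts j + δ, h⟩ else 0) then (1:ℕ) else 0)
      with hφdef
    set ψ : ((i : (B n : Finset ℕ)) → ℝ) → ℕ := fun v =>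
        (if τ < (Finset.range (Δ + 1)).sup' Finset.nonempty_range_add_one
            (fun δ => if h : ts n + δ ∈ B n then v ⟨ts n + δ, h⟩ else 0) then (1:ℕ) else 0)
      with hψdef
    have hsupmeas : ∀ (A : Finset ℕ) (t0 : ℕ), Measurable (fun v : ((i : A) → ℝ) =>
        (Finset.range (Δ + 1)).sup' Finset.nonempty_range_add_one
          (fun δ => if h : t0 + δ ∈ A then v ⟨t0 + δ, h⟩ else 0)) := by
      intro A t0
      have hmeas' : ∀ δ ∈ Finset.range (Δ+1), Measurable (fun v : ((i : A) → ℝ) =>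
          if h : t0 + δ ∈ A then v ⟨t0 + δ, h⟩ else 0) := by
        intro δ _
        by_cases h : t0 + δ ∈ A
        · simp only [dif_pos h]; exact measurable_pi_apply _
        · simp only [dif_neg h]; exact measurable_const
      have hm := Finset.measurable_sup' (s := Finset.range (Δ+1))
        Finset.nonempty_range_add_one hmeas'
      have hfe : (fun v : ((i : A) → ℝ) => (Finset.range (Δ + 1)).sup'
          Finset.nonempty_range_add_one
          (fun δ => if h : t0 + δ ∈ A then v ⟨t0 + δ, h⟩ else 0))
          = (Finset.range (Δ+1)).sup' Finset.nonempty_range_add_one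
            (fun δ => fun v : ((i : A) → ℝ) =>
              if h : t0 + δ ∈ A then v ⟨t0 + δ, h⟩ else 0) :=
        funext fun v => (Finset.sup'_apply Finset.nonempty_range_add_one
          (fun δ (v : ((i : A) → ℝ)) => if h : t0 + δ ∈ A then v ⟨t0 + δ, h⟩ else 0) v).symm
      rw [hfe]; exact hm
    have hφm : Measurable φ := by
      apply Finset.measurable_sum
      intro j _
      exact Measurable.ite (measurableSet_lt measurable_const (hsupmeas S (ts j)))
        measurable_const measurable_const
    have hψm : Measurable ψ :=
      Measurable.ite (measurableSet_lt measurable_const (hsupmeas (B n) (ts n)))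
        measurable_const measurable_const
    have hcomp := base.comp hφm hψm
    have he1 : (φ ∘ fun ω (i : S) => X i ω) = fun ω => ∑ j ∈ Finset.range n, Z j ω := by
      funext ω
      simp only [Function.comp_apply, hφdef, hZdef]
      refine Finset.sum_congr rfl fun j hj => ?_
      congr 1
      refine congrArg (τ < ·) (Finset.sup'_congr _ rfl fun δ hδ => ?_)
      rw [dif_pos (hmemS j (Finset.mem_range.mp hj) δ (Finset.mem_range.mp hδ))]
    have he2 : (ψ ∘ fun ω (i : (B n : Finset ℕ)) => X i ω) = Z n := by
      funext ω
      simp only [Function.comp_apply, hψdef, hZdef]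
      congr 1
      refine congrArg (τ < ·) (Finset.sup'_congr _ rfl fun δ hδ => ?_)
      rw [dif_pos (hmemT δ (Finset.mem_range.mp hδ))]
    rw [he1, he2] at hcomp
    exact hcomp
  have key := aux_binom' Z hZ01 hZm N (1 - q ^ (Δ + 1)) hp hind N le_rfl k
  have hgoal : {ω | (∑ j ∈ Finset.range N,
      if τ < (Finset.range (Δ + 1)).sup' Finset.nonempty_range_add_one
          (fun δ => X (ts j + δ) ω) then 1 else 0) = k}
      = {ω | (∑ j ∈ Finset.range N, Z j ω) = k} := rfl
  rw [hgoal, key]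
  -- arithmetic
  have hFpow : F ^ (Δ + 1) ≤ 1 := pow_le_one₀ hF0 hF1
  have hFpow0 : (0:ℝ) ≤ F ^ (Δ + 1) := pow_nonneg hF0 _
  have ha0 : (0:ℝ) ≤ 1 - F ^ (Δ + 1) := by linarith
  have hqpow : q ^ (Δ + 1) ≤ 1 := pow_le_one₀ (zero_le (a := q)) hq1
  have h1p : (1:ℝ≥0∞) - (1 - q ^ (Δ + 1)) = q ^ (Δ + 1) :=
    ENNReal.sub_sub_cancel ENNReal.one_ne_top hqpow
  have hb : (1 - (1 - F ^ (Δ + 1))) = F ^ (Δ + 1) := by ring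
  have e1 : ENNReal.ofReal (F ^ (Δ + 1)) = q ^ (Δ + 1) := by
    rw [ENNReal.ofReal_pow hF0]
  have e2 : ENNReal.ofReal (1 - F ^ (Δ + 1)) = 1 - q ^ (Δ + 1) := by
    rw [ENNReal.ofReal_sub _ hFpow0, ENNReal.ofReal_one, e1]
  rw [h1p, hb, ENNReal.ofReal_mul (by positivity), ENNReal.ofReal_mul (Nat.cast_nonneg _),
    ENNReal.ofReal_natCast, ENNReal.ofReal_pow ha0, ENNReal.ofReal_pow hFpow0, e2, e1]
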